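/- Block lower bound for constant switching costs: assume every g_ij is a constant. Then for the optimal strategy (δ*,u*) and every n ≥ 1, almost surely Σ_{k=1}^{nm} g_{u*_{k−1}u*_k} 1_{[τ*_k<T]} ≥ α n 1_{[τ*_{nm}<T]}. -/

import Mathlib

open MeasureTheory Set Filter
open scoped ENNReal

noncomputable section

namespace Switching

/-- Maximum of `f` over the indices `j ≠ i` (the inter-connected obstacle). -/
def maxNe {m : ℕ} (i : Fin m) (f : Fin m → ℝ) : ℝ :=
  ⨆ j : {j : Fin m // j ≠ i}, f (j : Fin m)

variable {Ω : Type*}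

/-- The payoff functional `∫_t^τ ψ_i(s,X_s) ds + max_{j≠i}(-g_{ij}(τ,X_τ) + Y^j_τ) 1_{[τ<T]}`
appearing in the Snell envelope characterization of the value processes. -/
def reward {k m : ℕ} (T : ℝ) (X : ℝ → Ω → EuclideanSpace ℝ (Fin k))
    (ψ : Fin m → ℝ → EuclideanSpace ℝ (Fin k) → ℝ)
    (g : Fin m → Fin m → ℝ → EuclideanSpace ℝ (Fin k) → ℝ)
    (Y : Fin m → ℝ → Ω → ℝ)
    (i : Fin m) (t : ℝ) (τ : Ω → ℝ) (ω : Ω) : ℝ :=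
  (∫ s in Ioc t (τ ω), ψ i s (X s ω)) +
    indicator {ω' | τ ω' < T}
      (fun ω' => maxNe i fun j => -(g i j (τ ω') (X (τ ω') ω')) + Y j (τ ω') ω') ω

/-- `Y` is the system of Snell-envelope value processes:  for every mode `i` and every
`t ∈ [0,T]`, `Y^i_t` is (a.s.) the least `F_t`-measurable random variable dominating
`E[∫_t^τ ψ_i(s,X_s) ds + max_{j≠i}(-g_{ij}(τ,X_τ)+Y^j_τ) 1_{[τ<T]} | F_t]` over all
stopping times `t ≤ τ ≤ T`. -/
def SnellSystem {m0 : MeasurableSpace Ω} {k m : ℕ} (T : ℝ) (μ : Measure Ω)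
    (ℱ : Filtration ℝ m0) (X : ℝ → Ω → EuclideanSpace ℝ (Fin k))
    (ψ : Fin m → ℝ → EuclideanSpace ℝ (Fin k) → ℝ)
    (g : Fin m → Fin m → ℝ → EuclideanSpace ℝ (Fin k) → ℝ)
    (Y : Fin m → ℝ → Ω → ℝ) : Prop :=
  ∀ i : Fin m, ∀ t ∈ Icc (0 : ℝ) T,
    (∀ τ : Ω → ℝ, IsStoppingTime ℱ (fun ω => (τ ω : WithTop ℝ)) → (∀ ω, τ ω ∈ Icc t T) →
      ∀ᵐ ω ∂μ, (μ[reward T X ψ g Y i t τ | ℱ t]) ω ≤ Y i t ω) ∧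
    (∀ Z : Ω → ℝ, Measurable[ℱ t] Z →
      (∀ τ : Ω → ℝ, IsStoppingTime ℱ (fun ω => (τ ω : WithTop ℝ)) → (∀ ω, τ ω ∈ Icc t T) →
        ∀ᵐ ω ∂μ, (μ[reward T X ψ g Y i t τ | ℱ t]) ω ≤ Z ω) →
      ∀ᵐ ω ∂μ, Y i t ω ≤ Z ω)

/-- An admissible switching strategy: a nondecreasing sequence of `[0,T]`-valued stopping
times `τ_n` (with the convention `τ_0 = 0`) together with `F_{τ_n}`-measurable mode choices
`ξ_n` (`ξ_0` being the initial mode). -/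
structure Strategy {m0 : MeasurableSpace Ω} (T : ℝ) (ℱ : Filtration ℝ m0) (m : ℕ) where
  τ : ℕ → Ω → ℝ
  ξ : ℕ → Ω → Fin m
  τ_zero : ∀ ω, τ 0 ω = 0
  τ_mono : ∀ ω, Monotone fun n => τ n ω
  τ_mem : ∀ n ω, τ n ω ∈ Icc (0 : ℝ) T
  τ_stop : ∀ n, IsStoppingTime ℱ (fun ω => (τ n ω : WithTop ℝ))
  ξ_meas : ∀ n j, MeasurableSet[(τ_stop n).measurableSpace] {ω | ξ n ω = j}

variable {m0 : MeasurableSpace Ω} {T : ℝ} {ℱ : Filtration ℝ m0} {k m : ℕ}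

/-- The mode indicator process `u_t` of a strategy: `u_t = ξ_n` on `(τ_n, τ_{n+1}]`
(and `u_t = ξ_0` on `[0, τ_1]`). -/
def Strategy.mode (S : Strategy T ℱ m) (t : ℝ) (ω : Ω) : Fin m :=
  S.ξ (sSup {n | S.τ n ω < t}) ω

/-- The `n`-th switching cost `g_{ξ_{n-1} ξ_n}(τ_n, X_{τ_n}) 1_{[τ_n < T]}` (indexed so that
`cost g X n` is the cost of the `(n+1)`-st switch). -/
def Strategy.cost (S : Strategy T ℱ m)
    (g : Fin m → Fin m → ℝ → EuclideanSpace ℝ (Fin k) → ℝ)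
    (X : ℝ → Ω → EuclideanSpace ℝ (Fin k)) (n : ℕ) (ω : Ω) : ℝ :=
  indicator {ω' | S.τ (n + 1) ω' < T}
    (fun ω' => g (S.ξ n ω') (S.ξ (n + 1) ω') (S.τ (n + 1) ω') (X (S.τ (n + 1) ω') ω')) ω

/-- The reverse switching cost `g_{ξ_n ξ_{n-1}}(τ_n, X_{τ_n}) 1_{[τ_n < T]}`. -/
def Strategy.revCost (S : Strategy T ℱ m)
    (g : Fin m → Fin m → ℝ → EuclideanSpace ℝ (Fin k) → ℝ)
    (X : ℝ → Ω → EuclideanSpace ℝ (Fin k)) (n : ℕ) (ω : Ω) : ℝ :=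
  indicator {ω' | S.τ (n + 1) ω' < T}
    (fun ω' => g (S.ξ (n + 1) ω') (S.ξ n ω') (S.τ (n + 1) ω') (X (S.τ (n + 1) ω') ω')) ω

/-- Total switching cost, as an extended nonnegative real (so that infinite total cost is
represented faithfully). -/
def Strategy.costENN (S : Strategy T ℱ m)
    (g : Fin m → Fin m → ℝ → EuclideanSpace ℝ (Fin k) → ℝ)
    (X : ℝ → Ω → EuclideanSpace ℝ (Fin k)) (ω : Ω) : ℝ≥0∞ :=
  ∑' n : ℕ, ENNReal.ofReal (S.cost g X n ω)

/-- The expected total profit `J(δ,ξ)` of a strategy. -/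
def profit (μ : Measure Ω) (X : ℝ → Ω → EuclideanSpace ℝ (Fin k))
    (ψ : Fin m → ℝ → EuclideanSpace ℝ (Fin k) → ℝ)
    (g : Fin m → Fin m → ℝ → EuclideanSpace ℝ (Fin k) → ℝ)
    (S : Strategy T ℱ m) : ℝ :=
  ∫ ω, ((∫ s in Ioc (0 : ℝ) T, ψ (S.mode s ω) s (X s ω)) - ∑' n : ℕ, S.cost g X n ω) ∂μ

/-- The candidate optimal strategy `(δ*, u*)` built from the value processes `Y`:
`τ*_{n+1}` is the first time after `τ*_n` at which the current value process touches its
inter-connected obstacle (truncated at `T`), and the new mode attains the maximum there. -/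
structure OptStrat (T : ℝ) (ℱ : Filtration ℝ m0)
    (X : ℝ → Ω → EuclideanSpace ℝ (Fin k))
    (g : Fin m → Fin m → ℝ → EuclideanSpace ℝ (Fin k) → ℝ)
    (Y : Fin m → ℝ → Ω → ℝ) (i0 : Fin m) extends Strategy T ℱ m where
  start : ∀ ω, ξ 0 ω = i0
  hitting : ∀ n ω, τ (n + 1) ω =
    min (sInf {s : ℝ | τ n ω ≤ s ∧
      Y (ξ n ω) s ω = maxNe (ξ n ω) fun j => -(g (ξ n ω) j s (X s ω)) + Y j s ω}) T
  switch_ne : ∀ n ω, τ (n + 1) ω < T → ξ (n + 1) ω ≠ ξ n ω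
  switch_attain : ∀ n ω, τ (n + 1) ω < T →
    Y (ξ n ω) (τ (n + 1) ω) ω =
      -(g (ξ n ω) (ξ (n + 1) ω) (τ (n + 1) ω) (X (τ (n + 1) ω) ω)) +
        Y (ξ (n + 1) ω) (τ (n + 1) ω) ω

/-- The standing hypotheses of the optimal multi-modes switching problem. -/
structure Hyps {m0 : MeasurableSpace Ω} {k m : ℕ} (T α : ℝ) (μ : Measure Ω)
    (ℱ : Filtration ℝ m0) (X : ℝ → Ω → EuclideanSpace ℝ (Fin k))
    (ψ : Fin m → ℝ → EuclideanSpace ℝ (Fin k) → ℝ)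
    (g : Fin m → Fin m → ℝ → EuclideanSpace ℝ (Fin k) → ℝ)
    (Y : Fin m → ℝ → Ω → ℝ) : Prop where
  prob : IsProbabilityMeasure μ
  right_cont : ∀ t : ℝ, ℱ t = ⨅ s : {s : ℝ // t < s}, ℱ (s : ℝ)
  X_cont : ∀ ω, ContinuousOn (fun t => X t ω) (Icc 0 T)
  X_adapted : ∀ t : ℝ, Measurable[ℱ t] (X t)
  ψ_cont : ∀ i, ContinuousOn (fun p : ℝ × EuclideanSpace ℝ (Fin k) => ψ i p.1 p.2)
    (Icc 0 T ×ˢ univ)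
  g_cont : ∀ i j, ContinuousOn (fun p : ℝ × EuclideanSpace ℝ (Fin k) => g i j p.1 p.2)
    (Icc 0 T ×ˢ univ)
  ψ_int : ∀ i, Integrable (fun ω => ∫ s in Icc (0 : ℝ) T, (ψ i s (X s ω)) ^ 2) μ
  g_int : ∀ i j, Integrable (fun ω => ⨆ t : Icc (0 : ℝ) T, (g i j (t : ℝ) (X (t : ℝ) ω)) ^ 2) μ
  Y_int : ∀ i, Integrable (fun ω => ⨆ t : Icc (0 : ℝ) T, (Y i (t : ℝ) ω) ^ 2) μ
  g_diag : ∀ i, ∀ t ∈ Icc (0 : ℝ) T, ∀ x, g i i t x = 0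
  g_nonneg : ∀ i j, ∀ t ∈ Icc (0 : ℝ) T, ∀ x, 0 ≤ g i j t x
  g_triangle : ∀ i j l, j ≠ i → l ≠ i → l ≠ j → ∀ t ∈ Icc (0 : ℝ) T, ∀ x,
    g i l t x < g i j t x + g j l t x
  g_alpha : ∀ i j, i ≠ j → ∀ t ∈ Icc (0 : ℝ) T, ∀ x, α < g i j t x + g j i t x
  Y_cont : ∀ i ω, ContinuousOn (fun t => Y i t ω) (Icc 0 T)
  Y_adapted : ∀ i, ∀ t : ℝ, Measurable[ℱ t] (Y i t)
  Y_T : ∀ i ω, Y i T ω = 0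
  snell : SnellSystem T μ ℱ X ψ g Y

/-- Path lower bound: the sum of switching costs along a path dominates the direct cost. -/
lemma path_lb {m : ℕ} (gc : Fin m → Fin m → ℝ)
    (hnn : ∀ i j, 0 ≤ gc i j)
    (htri : ∀ i j l : Fin m, j ≠ i → l ≠ i → l ≠ j → gc i l < gc i j + gc j l)
    (u : ℕ → Fin m) :
    ∀ L, 1 ≤ L → ∀ a, u (a + L) ≠ u a →
      gc (u a) (u (a + L)) ≤ ∑ q ∈ Finset.range L, gc (u (a + q)) (u (a + q + 1)) := by
  intro L
  induction L with
  | zero => omega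
  | succ L ih =>
    intro _ a hne
    rcases Nat.eq_zero_or_pos L with hL | hL
    · subst hL; simp
    · rw [Finset.sum_range_succ]
      have hsum_nonneg : (0 : ℝ) ≤ ∑ q ∈ Finset.range L, gc (u (a + q)) (u (a + q + 1)) :=
        Finset.sum_nonneg fun q _ => hnn _ _
      by_cases h : u (a + L) = u a
      · have h1 : gc (u a) (u (a + (L + 1))) = gc (u (a + L)) (u (a + L + 1)) := by
          rw [h]
          rfl
        rw [h1]
        linarith
      · by_cases h2 : u (a + L + 1) = u (a + L)
        · have h3 : gc (u a) (u (a + (L + 1))) = gc (u a) (u (a + L)) := by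
            have : u (a + (L + 1)) = u (a + L) := h2
            rw [this]
          rw [h3]
          have := ih hL a h
          linarith [hnn (u (a + L)) (u (a + L + 1))]
        · have htr := htri (u a) (u (a + L)) (u (a + L + 1)) h hne h2
          have := ih hL a h
          have : gc (u a) (u (a + (L + 1))) ≤
              gc (u a) (u (a + L)) + gc (u (a + L)) (u (a + L + 1)) := le_of_lt htr
          have hih := ih hL a h
          linarith

/-- Cycle lower bound: the sum of switching costs along a cycle is at least `α`. -/
lemma cycle_lb {m : ℕ} {α : ℝ} (gc : Fin m → Fin m → ℝ)
    (hnn : ∀ i j, 0 ≤ gc i j)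
    (htri : ∀ i j l : Fin m, j ≠ i → l ≠ i → l ≠ j → gc i l < gc i j + gc j l)
    (halp : ∀ i j : Fin m, i ≠ j → α < gc i j + gc j i)
    (u : ℕ → Fin m) (L : ℕ) (hL : 2 ≤ L) (a : ℕ)
    (hne : ∀ q, a ≤ q → q < a + L → u (q + 1) ≠ u q)
    (hcy : u (a + L) = u a) :
    α ≤ ∑ q ∈ Finset.range L, gc (u (a + q)) (u (a + q + 1)) := by
  obtain ⟨L', rfl⟩ : ∃ L', L = L' + 1 := ⟨L - 1, by omega⟩
  rw [Finset.sum_range_succ]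
  have hcy' : u (a + L' + 1) = u a := hcy
  have h1 : u (a + L' + 1) ≠ u (a + L') := hne (a + L') (by omega) (by omega)
  have h2 : u (a + L') ≠ u a := fun h => h1 (by rw [hcy', h])
  have hp := path_lb gc hnn htri u L' (by omega) a h2
  have ht := halp (u a) (u (a + L')) (Ne.symm h2)
  have h3 : gc (u (a + L')) (u (a + L' + 1)) = gc (u (a + L')) (u a) := by rw [hcy']
  linarith

/-- Block lower bound: within any `m` consecutive switches, total cost is at least `α`. -/
lemma block_lb {m : ℕ} {α : ℝ} (gc : Fin m → Fin m → ℝ)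
    (hnn : ∀ i j, 0 ≤ gc i j)
    (htri : ∀ i j l : Fin m, j ≠ i → l ≠ i → l ≠ j → gc i l < gc i j + gc j l)
    (halp : ∀ i j : Fin m, i ≠ j → α < gc i j + gc j i)
    (u : ℕ → Fin m) (a : ℕ)
    (hne : ∀ q, a ≤ q → q < a + m → u (q + 1) ≠ u q) :
    α ≤ ∑ q ∈ Finset.range m, gc (u (a + q)) (u (a + q + 1)) := by
  obtain ⟨p, r, hpr, hle, heq⟩ :
      ∃ p r : ℕ, p < r ∧ r ≤ m ∧ u (a + p) = u (a + r) := by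
    obtain ⟨p, r, hpr, heq⟩ := Fintype.exists_ne_map_eq_of_card_lt
      (fun t : Fin (m + 1) => u (a + (t : ℕ))) (by simp)
    rcases lt_or_gt_of_ne hpr with h | h
    · exact ⟨p, r, h, Nat.lt_succ_iff.mp r.isLt, heq⟩
    · exact ⟨r, p, h, Nat.lt_succ_iff.mp p.isLt, heq.symm⟩
  have hd : 2 ≤ r - p := by
    rcases Nat.lt_or_ge (r - p) 2 with h | h
    · have : r = p + 1 := by omega
      subst this
      exact absurd heq.symm (hne (a + p) (by omega) (by omega))
    · exact h
  have hsub : Finset.Ico p r ⊆ Finset.range m := by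
    intro x hx
    simp only [Finset.mem_Ico] at hx
    simp only [Finset.mem_range]
    omega
  have h1 : (∑ q ∈ Finset.Ico p r, gc (u (a + q)) (u (a + q + 1))) ≤
      ∑ q ∈ Finset.range m, gc (u (a + q)) (u (a + q + 1)) :=
    Finset.sum_le_sum_of_subset_of_nonneg hsub fun i _ _ => hnn _ _
  have h2 : (∑ q ∈ Finset.Ico p r, gc (u (a + q)) (u (a + q + 1))) =
      ∑ q ∈ Finset.range (r - p), gc (u (a + p + q)) (u (a + p + q + 1)) := by
    rw [Finset.sum_Ico_eq_sum_range]
    apply Finset.sum_congr rfl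
    intro x _
    congr 2 <;> omega
  have hcyc : α ≤ ∑ q ∈ Finset.range (r - p), gc (u (a + p + q)) (u (a + p + q + 1)) := by
    apply cycle_lb gc hnn htri halp u (r - p) hd (a + p)
    · intro q hq1 hq2
      exact hne q (by omega) (by omega)
    · have : a + p + (r - p) = a + r := by omega
      rw [this, heq]
  linarith

/-- Total lower bound over `n` blocks. -/
lemma total_lb {m : ℕ} {α : ℝ} (gc : Fin m → Fin m → ℝ)
    (hnn : ∀ i j, 0 ≤ gc i j)
    (htri : ∀ i j l : Fin m, j ≠ i → l ≠ i → l ≠ j → gc i l < gc i j + gc j l)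
    (halp : ∀ i j : Fin m, i ≠ j → α < gc i j + gc j i)
    (u : ℕ → Fin m) (n : ℕ)
    (hne : ∀ q, q < n * m → u (q + 1) ≠ u q) :
    α * n ≤ ∑ q ∈ Finset.range (n * m), gc (u q) (u (q + 1)) := by
  induction n with
  | zero => simp
  | succ n ih =>
    have hmul : (n + 1) * m = n * m + m := by ring
    rw [hmul, Finset.sum_range_add]
    have hih := ih fun q hq => hne q (by omega)
    have hblk : α ≤ ∑ q ∈ Finset.range m, gc (u (n * m + q)) (u (n * m + q + 1)) :=
      block_lb gc hnn htri halp u (n * m) fun q hq1 hq2 => hne q (by omega)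
    push_cast
    linarith

/-- **Block lower bound for constant switching costs.**  If every switching cost `g_{ij}` is a
constant, then for the optimal strategy `(δ*,u*)` and every `n ≥ 1`, almost surely
`Σ_{q=1}^{nm} g_{u*_{q-1} u*_q} 1_{[τ*_q<T]} ≥ α n 1_{[τ*_{nm}<T]}`. -/
theorem block_lower_bound_constant_costs
    {Ω : Type*} {m0 : MeasurableSpace Ω} {k m : ℕ} {T α : ℝ}
    {μ : Measure Ω} {ℱ : Filtration ℝ m0}
    {X : ℝ → Ω → EuclideanSpace ℝ (Fin k)}
    {ψ : Fin m → ℝ → EuclideanSpace ℝ (Fin k) → ℝ}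
    (gc : Fin m → Fin m → ℝ)
    {Y : Fin m → ℝ → Ω → ℝ}
    (hT : 0 < T) (hk : 1 ≤ k) (hm : 2 ≤ m) (hα : 0 < α)
    (H : Hyps T α μ ℱ X ψ (fun i j _ _ => gc i j) Y)
    (i0 : Fin m) (hi0 : i0 = ⟨0, by omega⟩)
    (S : OptStrat T ℱ X (fun i j _ _ => gc i j) Y i0) :
    ∀ n : ℕ, 1 ≤ n →
      ∀ᵐ ω ∂μ,
        indicator {ω' | S.τ (n * m) ω' < T} (fun _ => α * n) ω ≤
          ∑ q ∈ Finset.range (n * m),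
            indicator {ω' | S.τ (q + 1) ω' < T}
              (fun ω' => gc (S.ξ q ω') (S.ξ (q + 1) ω')) ω := by
  intro n hn
  have h0T : (0 : ℝ) ∈ Icc (0 : ℝ) T := ⟨le_refl 0, hT.le⟩
  have hnn : ∀ i j, 0 ≤ gc i j := fun i j => H.g_nonneg i j 0 h0T 0
  have htri : ∀ i j l : Fin m, j ≠ i → l ≠ i → l ≠ j → gc i l < gc i j + gc j l :=
    fun i j l h1 h2 h3 => H.g_triangle i j l h1 h2 h3 0 h0T 0
  have halp : ∀ i j : Fin m, i ≠ j → α < gc i j + gc j i :=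
    fun i j h => H.g_alpha i j h 0 h0T 0
  apply Filter.Eventually.of_forall
  intro ω
  by_cases hτ : S.τ (n * m) ω < T
  · have hqlt : ∀ q, q < n * m → S.τ (q + 1) ω < T := fun q hq =>
      lt_of_le_of_lt (S.τ_mono ω (by omega : q + 1 ≤ n * m)) hτ
    have hrw : ∀ q ∈ Finset.range (n * m),
        indicator {ω' | S.τ (q + 1) ω' < T}
          (fun ω' => gc (S.ξ q ω') (S.ξ (q + 1) ω')) ω = gc (S.ξ q ω) (S.ξ (q + 1) ω) :=
      fun q hq => Set.indicator_of_mem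
        (show ω ∈ {ω' | S.τ (q + 1) ω' < T} from hqlt q (Finset.mem_range.mp hq)) _
    rw [Finset.sum_congr rfl hrw,
      Set.indicator_of_mem (show ω ∈ {ω' | S.τ (n * m) ω' < T} from hτ)]
    exact total_lb gc hnn htri halp (fun q => S.ξ q ω) n
      (fun q hq => S.switch_ne q ω (hqlt q hq))
  · rw [Set.indicator_of_notMem (show ω ∉ {ω' | S.τ (n * m) ω' < T} from hτ)]
    exact Finset.sum_nonneg fun q _ =>
      Set.indicator_nonneg (fun ω' _ => hnn _ _) ω

end Switching

end
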